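/- Rank bound for Hankel matrices of system trajectories. Let n, m, p, L, T be positive integers with L ≤ T, and let A ∈ ℝ^{n×n}, B ∈ ℝ^{n×m}, C ∈ ℝ^{p×n}, D ∈ ℝ^{p×m} define a discrete-time LTI system. If w_d ∈ ℝ^{(m+p)T} is a length-T trajectory of the system, then rank H_L(w_d) ≤ mL + rank O_L ≤ mL + n, where O_L = col(C, CA, …, CA^{L−1}) is the depth-L observability matrix. Consequently, the generalized persistency of excitation condition rank H_L(w_d) = mL + n is the maximal possible rank of the Hankel matrix H_L(w_d). -/

import Mathlib

open Matrix

/-- A length-`L` trajectory of the discrete-time LTI system `(A,B,C,D)`: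
a stacked vector `w : Fin L × (Fin m ⊕ Fin p) → ℝ`, where `w (t, Sum.inl i)` are
the input components `u(t)` and `w (t, Sum.inr j)` the output components `y(t)`,
for which there exists a compatible state sequence. -/
def IsTraj {n m p : ℕ} (A : Matrix (Fin n) (Fin n) ℝ) (B : Matrix (Fin n) (Fin m) ℝ)
    (C : Matrix (Fin p) (Fin n) ℝ) (D : Matrix (Fin p) (Fin m) ℝ) (L : ℕ)
    (w : Fin L × (Fin m ⊕ Fin p) → ℝ) : Prop :=
  ∃ x : Fin L → Fin n → ℝ,
    (∀ t : Fin L, ∀ h : (t : ℕ) + 1 < L,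
      x ⟨(t : ℕ) + 1, h⟩ = A.mulVec (x t) + B.mulVec (fun i => w (t, Sum.inl i))) ∧
    (∀ t : Fin L,
      (fun j => w (t, Sum.inr j)) = C.mulVec (x t) + D.mulVec (fun i => w (t, Sum.inl i)))

/-- The restricted behavior `B|_L`: the set of all length-`L` trajectories,
viewed as stacked vectors in `ℝ^{(m+p)L}`. -/
def Behavior {n m p : ℕ} (A : Matrix (Fin n) (Fin n) ℝ) (B : Matrix (Fin n) (Fin m) ℝ)
    (C : Matrix (Fin p) (Fin n) ℝ) (D : Matrix (Fin p) (Fin m) ℝ) (L : ℕ) :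
    Set (Fin L × (Fin m ⊕ Fin p) → ℝ) :=
  {w | IsTraj A B C D L w}

/-- The Hankel matrix of depth `L` associated with a length-`T` sequence `w`
with values in `ℝ^q`: the `(i,j)` block entry is `w (i + j)` (0-based). -/
def hankel {q : Type} (L T : ℕ) (hLT : L ≤ T) (w : Fin T × q → ℝ) :
    Matrix (Fin L × q) (Fin (T - L + 1)) ℝ :=
  fun ik j =>
    w (⟨(ik.1 : ℕ) + (j : ℕ), by
        have h1 := ik.1.isLt
        have h2 := j.isLt
        omega⟩, ik.2)

/-- The depth-`L` observability matrix `O_L = col(C, CA, …, CA^{L−1})`. -/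
def obsMat {n p : ℕ} (C : Matrix (Fin p) (Fin n) ℝ) (A : Matrix (Fin n) (Fin n) ℝ)
    (L : ℕ) : Matrix (Fin L × Fin p) (Fin n) ℝ :=
  fun tj i => (C * A ^ (tj.1 : ℕ)) tj.2 i

/-- The controllability matrix `[B, AB, …, A^{n−1}B]`. -/
def ctrbMat {n m : ℕ} (A : Matrix (Fin n) (Fin n) ℝ) (B : Matrix (Fin n) (Fin m) ℝ) :
    Matrix (Fin n) (Fin n × Fin m) ℝ :=
  fun i kj => (A ^ (kj.1 : ℕ) * B) i kj.2

/-- **Rank bound for Hankel matrices of system trajectories.** For any length-`T`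
trajectory `w_d` of the LTI system `(A,B,C,D)` and `L ≤ T`,
`rank H_L(w_d) ≤ mL + rank O_L ≤ mL + n`; hence the generalized persistency of
excitation condition `rank H_L(w_d) = mL + n` is the maximal possible rank. -/
lemma matrix_rank_add_le {I J : Type} [Fintype I] [Fintype J]
    (A B : Matrix I J ℝ) : (A + B).rank ≤ A.rank + B.rank := by
  classical
  unfold Matrix.rank
  rw [Matrix.mulVecLin_add]
  have h : LinearMap.range (A.mulVecLin + B.mulVecLin) ≤
      LinearMap.range A.mulVecLin ⊔ LinearMap.range B.mulVecLin := by
    rintro x ⟨v, rfl⟩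
    exact Submodule.mem_sup.2 ⟨A.mulVecLin v, ⟨v, rfl⟩, B.mulVecLin v, ⟨v, rfl⟩, rfl⟩
  calc Module.finrank ℝ (LinearMap.range (A.mulVecLin + B.mulVecLin))
      ≤ Module.finrank ℝ ↥(LinearMap.range A.mulVecLin ⊔ LinearMap.range B.mulVecLin) :=
        Submodule.finrank_mono h
    _ ≤ _ := Submodule.finrank_add_le_finrank_add_finrank _ _

lemma state_formula' {n m T : ℕ}
    (A : Matrix (Fin n) (Fin n) ℝ) (B : Matrix (Fin n) (Fin m) ℝ)
    (U : ℕ → Fin m → ℝ) (x : Fin T → Fin n → ℝ)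
    (hx : ∀ j : ℕ, ∀ h : j + 1 < T,
      x ⟨j + 1, h⟩ = A.mulVec (x ⟨j, by omega⟩) + B.mulVec (U j)) :
    ∀ t j (h : j + t < T),
      x ⟨j + t, h⟩ = (A ^ t).mulVec (x ⟨j, by omega⟩) +
        ∑ s ∈ Finset.range t, ((A ^ (t - 1 - s)) * B).mulVec (U (j + s)) := by
  intro t
  induction t with
  | zero =>
    intro j h
    simp [pow_zero, Matrix.one_mulVec]
  | succ t ih =>
    intro j h
    have h1 : j + t < T := by omega
    have this1 : x ⟨j + (t + 1), h⟩ =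
        A.mulVec (x ⟨j + t, h1⟩) + B.mulVec (U (j + t)) := hx (j + t) (by omega)
    rw [this1, ih j h1]
    rw [Finset.sum_range_succ]
    simp only [Matrix.mulVec_add]
    rw [Matrix.mulVec_mulVec, ← pow_succ']
    have hsum : A.mulVec (∑ s ∈ Finset.range t, ((A ^ (t - 1 - s)) * B).mulVec (U (j + s)))
        = ∑ s ∈ Finset.range t, ((A ^ (t + 1 - 1 - s)) * B).mulVec (U (j + s)) := by
      simp only [← Matrix.mulVecLin_apply, map_sum]
      simp only [Matrix.mulVecLin_apply]
      refine Finset.sum_congr rfl fun s hs => ?_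
      rw [Matrix.mulVec_mulVec, ← Matrix.mul_assoc, ← pow_succ']
      have hst := Finset.mem_range.1 hs
      have he : t - 1 - s + 1 = t + 1 - 1 - s := by omega
      rw [he]
    rw [hsum]
    have h0 : t + 1 - 1 - t = 0 := by omega
    rw [h0, pow_zero, Matrix.one_mul]
    abel

def inputU {m p T : ℕ} (wd : Fin T × (Fin m ⊕ Fin p) → ℝ) : ℕ → Fin m → ℝ :=
  fun s => if h : s < T then (fun i => wd (⟨s, h⟩, Sum.inl i)) else 0

def MuMat {n m p : ℕ} (A : Matrix (Fin n) (Fin n) ℝ) (B : Matrix (Fin n) (Fin m) ℝ)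
    (C : Matrix (Fin p) (Fin n) ℝ) (D : Matrix (Fin p) (Fin m) ℝ) (L : ℕ) :
    Matrix (Fin L × (Fin m ⊕ Fin p)) (Fin L × Fin m) ℝ :=
  fun tc si =>
    Sum.elim (fun i => if si = (tc.1, i) then (1 : ℝ) else 0)
      (fun r => if (si.1 : ℕ) = (tc.1 : ℕ) then D r si.2
        else if (si.1 : ℕ) < (tc.1 : ℕ) then
          (C * A ^ ((tc.1 : ℕ) - 1 - (si.1 : ℕ)) * B) r si.2 else 0) tc.2

def MxMat {n m p : ℕ} (A : Matrix (Fin n) (Fin n) ℝ)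
    (C : Matrix (Fin p) (Fin n) ℝ) (L : ℕ) :
    Matrix (Fin L × (Fin m ⊕ Fin p)) (Fin n) ℝ :=
  fun tc i => Sum.elim (fun _ => (0 : ℝ)) (fun r => (C * A ^ (tc.1 : ℕ)) r i) tc.2

def selE {m p L : ℕ} : Matrix (Fin L × (Fin m ⊕ Fin p)) (Fin L × Fin p) ℝ :=
  fun tc tr => Sum.elim (fun _ => (0 : ℝ)) (fun r => if tr = (tc.1, r) then 1 else 0) tc.2

lemma mulVec_sum_apply {α I J : Type} [Fintype J] (C : Matrix I J ℝ)
    (s : Finset α) (v : α → J → ℝ) (r : I) :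
    (C.mulVec (∑ a ∈ s, v a)) r = ∑ a ∈ s, (C.mulVec (v a)) r := by
  simp only [← Matrix.mulVecLin_apply, map_sum, Finset.sum_apply]

lemma MxMat_eq {n m p : ℕ} (A : Matrix (Fin n) (Fin n) ℝ)
    (C : Matrix (Fin p) (Fin n) ℝ) (L : ℕ) :
    MxMat (m := m) A C L = selE (m := m) (p := p) (L := L) * obsMat C A L := by
  ext ⟨t, c⟩ i
  cases c with
  | inl i' => simp [MxMat, selE, Matrix.mul_apply]
  | inr r =>
    simp only [MxMat, selE, obsMat, Matrix.mul_apply, Sum.elim_inr, ite_mul, one_mul, zero_mul]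
    rw [Finset.sum_ite_eq']
    simp

lemma hankel_decomp
    {n m p L T : ℕ}
    (hn : 0 < n) (hm : 0 < m) (hp : 0 < p) (hL : 0 < L) (hT : 0 < T)
    (hLT : L ≤ T)
    (A : Matrix (Fin n) (Fin n) ℝ) (B : Matrix (Fin n) (Fin m) ℝ)
    (C : Matrix (Fin p) (Fin n) ℝ) (D : Matrix (Fin p) (Fin m) ℝ)
    (wd : Fin T × (Fin m ⊕ Fin p) → ℝ)
    (x : Fin T → Fin n → ℝ)
    (hx1 : ∀ t : Fin T, ∀ h : (t : ℕ) + 1 < T,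
      x ⟨(t : ℕ) + 1, h⟩ = A.mulVec (x t) + B.mulVec (fun i => wd (t, Sum.inl i)))
    (hx2 : ∀ t : Fin T,
      (fun j => wd (t, Sum.inr j)) = C.mulVec (x t) + D.mulVec (fun i => wd (t, Sum.inl i)))
    (hxrec : ∀ j : ℕ, ∀ h : j + 1 < T,
      x ⟨j + 1, h⟩ = A.mulVec (x ⟨j, by omega⟩) + B.mulVec (inputU wd j))
    (hsf : ∀ t j (h : j + t < T),
      x ⟨j + t, h⟩ = (A ^ t).mulVec (x ⟨j, by omega⟩) +
        ∑ s ∈ Finset.range t, ((A ^ (t - 1 - s)) * B).mulVec (inputU wd (j + s))) :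
    hankel L T hLT wd
      = MuMat A B C D L * (Matrix.of fun (si : Fin L × Fin m) (j : Fin (T - L + 1)) =>
          inputU wd ((j : ℕ) + (si.1 : ℕ)) si.2)
        + MxMat A C L * (Matrix.of fun (i : Fin n) (j : Fin (T - L + 1)) =>
            x ⟨(j : ℕ), by have := j.isLt; omega⟩ i) := by
  classical
  have hUdef : ∀ s (h : s < T), inputU wd s = fun i => wd (⟨s, h⟩, Sum.inl i) := by
    intro s h; simp [inputU, h]
  ext ⟨⟨t, ht⟩, c⟩ j
  have hjT : (j : ℕ) < T := by have := j.isLt; omega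
  have hjt : (j : ℕ) + t < T := by have := j.isLt; omega
  have efin : (⟨t + (j : ℕ), by omega⟩ : Fin T) = ⟨(j : ℕ) + t, hjt⟩ :=
    Fin.ext (Nat.add_comm _ _)
  cases c with
  | inl i =>
    show wd (⟨t + (j : ℕ), by omega⟩, Sum.inl i) = _
    rw [efin]
    rw [Matrix.add_apply, Matrix.mul_apply, Matrix.mul_apply]
    simp only [Matrix.of_apply]
    have hz : ∑ k, MxMat (m := m) A C L (⟨t, ht⟩, Sum.inl i) k *
        x ⟨(j : ℕ), by omega⟩ k = 0 := by
      simp [MxMat]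
    rw [hz, add_zero]
    simp only [MuMat, Sum.elim_inl, ite_mul, one_mul, zero_mul]
    rw [Finset.sum_ite_eq']
    simp only [Finset.mem_univ, if_true]
    rw [hUdef _ hjt]
  | inr r =>
    show wd (⟨t + (j : ℕ), by omega⟩, Sum.inr r) = _
    rw [efin]
    -- left side: output equation + state formula
    have hy : wd (⟨(j : ℕ) + t, hjt⟩, Sum.inr r) =
        (C.mulVec (x ⟨(j : ℕ) + t, hjt⟩)) r
          + (D.mulVec (inputU wd ((j : ℕ) + t))) r := by
      have h2 := congrFun (hx2 ⟨(j : ℕ) + t, hjt⟩) r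
      rw [hUdef _ hjt]
      simpa using h2
    have hxv := hsf t (j : ℕ) hjt
    have hLHS : wd (⟨(j : ℕ) + t, hjt⟩, Sum.inr r) =
        ((C * A ^ t).mulVec (x ⟨(j : ℕ), hjT⟩)) r
          + (∑ s ∈ Finset.range t,
              ((C * A ^ (t - 1 - s) * B).mulVec (inputU wd ((j : ℕ) + s))) r)
          + (D.mulVec (inputU wd ((j : ℕ) + t))) r := by
      rw [hy, hxv]
      simp only [Matrix.mulVec_add, Matrix.mulVec_mulVec, Pi.add_apply]
      congr 1
      congr 1
      rw [mulVec_sum_apply]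
      refine Finset.sum_congr rfl fun s hs => ?_
      rw [Matrix.mulVec_mulVec, ← Matrix.mul_assoc]
    rw [hLHS]
    -- right side
    rw [Matrix.add_apply, Matrix.mul_apply, Matrix.mul_apply]
    simp only [Matrix.of_apply]
    have hMx : ∑ k, MxMat (m := m) A C L (⟨t, ht⟩, Sum.inr r) k *
        x ⟨(j : ℕ), by omega⟩ k = ((C * A ^ t).mulVec (x ⟨(j : ℕ), hjT⟩)) r := by
      simp [MxMat, Matrix.mulVec, dotProduct]
    rw [hMx]
    have hMu : ∑ si : Fin L × Fin m, MuMat A B C D L (⟨t, ht⟩, Sum.inr r) si *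
        inputU wd ((j : ℕ) + (si.1 : ℕ)) si.2
        = (D.mulVec (inputU wd ((j : ℕ) + t))) r
          + ∑ s ∈ Finset.range t,
              ((C * A ^ (t - 1 - s) * B).mulVec (inputU wd ((j : ℕ) + s))) r := by
      rw [Fintype.sum_prod_type]
      have hinner : ∀ s : Fin L,
          (∑ i' : Fin m, MuMat A B C D L (⟨t, ht⟩, Sum.inr r) (s, i') *
            inputU wd ((j : ℕ) + (s : ℕ)) i')
          = (if (s : ℕ) = t then (D.mulVec (inputU wd ((j : ℕ) + t))) r else 0)
            + (if (s : ℕ) < t then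
                ((C * A ^ (t - 1 - (s : ℕ)) * B).mulVec (inputU wd ((j : ℕ) + (s : ℕ)))) r
              else 0) := by
        intro s
        by_cases h1 : (s : ℕ) = t
        · simp [MuMat, h1, Matrix.mulVec, dotProduct]
        · by_cases h2 : (s : ℕ) < t
          · simp [MuMat, h1, h2, Matrix.mulVec, dotProduct]
          · simp [MuMat, h1, h2]
      calc (∑ s : Fin L, ∑ i' : Fin m, MuMat A B C D L (⟨t, ht⟩, Sum.inr r) (s, i') *
            inputU wd ((j : ℕ) + (s : ℕ)) i')
          = ∑ s : Fin L,
            ((if (s : ℕ) = t then (D.mulVec (inputU wd ((j : ℕ) + t))) r else 0)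
              + (if (s : ℕ) < t then
                  ((C * A ^ (t - 1 - (s : ℕ)) * B).mulVec (inputU wd ((j : ℕ) + (s : ℕ)))) r
                else 0)) := Finset.sum_congr rfl fun s _ => hinner s
        _ = (∑ s ∈ Finset.range L,
              (if s = t then (D.mulVec (inputU wd ((j : ℕ) + t))) r else 0))
            + (∑ s ∈ Finset.range L,
              (if s < t then
                  ((C * A ^ (t - 1 - s) * B).mulVec (inputU wd ((j : ℕ) + s))) r
                else 0)) := by
            rw [Finset.sum_add_distrib]
            exact congrArg₂ (· + ·)
              (Fin.sum_univ_eq_sum_range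
                (fun s => if s = t then (D.mulVec (inputU wd ((j : ℕ) + t))) r else 0) L)
              (Fin.sum_univ_eq_sum_range
                (fun s => if s < t then
                  ((C * A ^ (t - 1 - s) * B).mulVec (inputU wd ((j : ℕ) + s))) r else 0) L)
        _ = _ := by
            congr 1
            · rw [Finset.sum_ite_eq']
              simp [Finset.mem_range.2 ht]
            · rw [← Finset.sum_filter]
              congr 1
              ext a
              simp only [Finset.mem_filter, Finset.mem_range]
              omega
    rw [hMu]
    ring

theorem hankel_rank_bound
    {n m p L T : ℕ}
    (hn : 0 < n) (hm : 0 < m) (hp : 0 < p) (hL : 0 < L) (hT : 0 < T)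
    (hLT : L ≤ T)
    (A : Matrix (Fin n) (Fin n) ℝ) (B : Matrix (Fin n) (Fin m) ℝ)
    (C : Matrix (Fin p) (Fin n) ℝ) (D : Matrix (Fin p) (Fin m) ℝ)
    (wd : Fin T × (Fin m ⊕ Fin p) → ℝ)
    (hwd : IsTraj A B C D T wd) :
    (hankel L T hLT wd).rank ≤ m * L + (obsMat C A L).rank ∧
    m * L + (obsMat C A L).rank ≤ m * L + n := by
  classical
  obtain ⟨x, hx1, hx2⟩ := hwd
  have hxrec : ∀ j : ℕ, ∀ h : j + 1 < T,
      x ⟨j + 1, h⟩ = A.mulVec (x ⟨j, by omega⟩) + B.mulVec (inputU wd j) := by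
    intro j h
    have hj : j < T := by omega
    have : inputU wd j = fun i => wd (⟨j, hj⟩, Sum.inl i) := by simp [inputU, hj]
    rw [this]
    exact hx1 ⟨j, hj⟩ h
  have hsf := state_formula' A B (inputU wd) x hxrec
  have hH := hankel_decomp hn hm hp hL hT hLT A B C D wd x hx1 hx2 hxrec hsf
  constructor
  · rw [hH, MxMat_eq]
    calc (MuMat A B C D L * (Matrix.of fun (si : Fin L × Fin m) (j : Fin (T - L + 1)) =>
          inputU wd ((j : ℕ) + (si.1 : ℕ)) si.2)
        + (selE (m := m) (p := p) (L := L) * obsMat C A L) * (Matrix.of fun (i : Fin n) (j : Fin (T - L + 1)) =>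
            x ⟨(j : ℕ), by have := j.isLt; omega⟩ i)).rank
        ≤ (MuMat A B C D L * (Matrix.of fun (si : Fin L × Fin m) (j : Fin (T - L + 1)) =>
            inputU wd ((j : ℕ) + (si.1 : ℕ)) si.2)).rank
          + ((selE (m := m) (p := p) (L := L) * obsMat C A L) * (Matrix.of fun (i : Fin n) (j : Fin (T - L + 1)) =>
              x ⟨(j : ℕ), by have := j.isLt; omega⟩ i)).rank := matrix_rank_add_le _ _
      _ ≤ m * L + (obsMat C A L).rank := by
          refine add_le_add ?_ ?_
          · refine le_trans (Matrix.rank_mul_le_left _ _) ?_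
            refine le_trans (Matrix.rank_le_card_width _) ?_
            simp [Fintype.card_prod, Nat.mul_comm]
          · exact le_trans (Matrix.rank_mul_le_left _ _) (Matrix.rank_mul_le_right _ _)
  · have hobs : (obsMat C A L).rank ≤ n := by
      refine le_trans (Matrix.rank_le_card_width _) ?_
      simp
    omega
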